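/- Let n ≥ 2 and let (i_1, …, i_{n−1}) be any permutation of (1, …, n−1). Then there exists a subset S of {1, …, n−2} such that, in B_n, the braid σ_{i_1} σ_{i_2} ⋯ σ_{i_{n−1}} equals the normal-form braid of S. -/

import Mathlib

/-- The braid relations on `m` generators (for the braid group `B_{m+1}`). -/
def braidRels (m : ℕ) : Set (FreeGroup (Fin m)) :=
  { r | (∃ i j : Fin m, (i : ℕ) + 2 ≤ (j : ℕ) ∧
      r = FreeGroup.of i * FreeGroup.of j * (FreeGroup.of i)⁻¹ * (FreeGroup.of j)⁻¹) ∨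
    (∃ i j : Fin m, (j : ℕ) = (i : ℕ) + 1 ∧
      r = FreeGroup.of i * FreeGroup.of j * FreeGroup.of i *
          (FreeGroup.of j * FreeGroup.of i * FreeGroup.of j)⁻¹) }

/-- The braid group `B_n`, presented on `n - 1` generators. -/
abbrev BraidGroup (n : ℕ) := PresentedGroup (braidRels (n - 1))

/-- The generator `σ_i` of `B_n`, for `1 ≤ i ≤ n - 1` (and the identity otherwise). -/
def braidGen (n i : ℕ) : BraidGroup n :=
  if h : 1 ≤ i ∧ i ≤ n - 1 then PresentedGroup.of (⟨i - 1, by omega⟩ : Fin (n - 1)) else 1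

/-- The product `σ_{i_1} σ_{i_2} ⋯ σ_{i_ℓ}` associated to a list of indices. -/
def wordProd (n : ℕ) (l : List ℕ) : BraidGroup n := (l.map (braidGen n)).prod

/-- A positive braid: a product of generators `σ_i`, `1 ≤ i ≤ n-1` (no inverses). -/
def IsPositiveBraid (n : ℕ) (β : BraidGroup n) : Prop :=
  ∃ l : List ℕ, (∀ i ∈ l, 1 ≤ i ∧ i ≤ n - 1) ∧ β = wordProd n l

/-- The half twist `Δ_n = (σ_1)(σ_2 σ_1)(σ_3 σ_2 σ_1) ⋯ (σ_{n-1} ⋯ σ_1)`. -/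
def halfTwist (n : ℕ) : BraidGroup n :=
  wordProd n (((List.range (n - 1)).map (fun k => (List.range (k + 1)).reverse.map (· + 1))).flatten)

/-- The standard root `δ_n = σ_1 σ_2 ⋯ σ_{n-1}`. -/
def stdRoot (n : ℕ) : BraidGroup n := wordProd n ((List.range (n - 1)).map (· + 1))

/-- The reversed root `δ̄_n = σ_{n-1} σ_{n-2} ⋯ σ_1`. -/
def stdRootBar (n : ℕ) : BraidGroup n := wordProd n (((List.range (n - 1)).map (· + 1)).reverse)

/-- The descending chain `b, b-1, …, a+1` (of length `b - a`). -/
def chainDesc (a b : ℕ) : List ℕ := (List.range (b - a)).map (fun t => b - t)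

/-- The normal-form index sequence of a subset `S = {j_1 < ⋯ < j_r} ⊆ {1, …, n-2}`:
the concatenation of the decreasing chains
`j_1, …, 1; j_2, …, j_1 + 1; …; n-1, …, j_r + 1`. -/
def normalWord (n : ℕ) (S : Finset ℕ) : List ℕ :=
  let bs : List ℕ := (0 :: S.sort (· ≤ ·)) ++ [n - 1]
  ((bs.zip bs.tail).map (fun p => chainDesc p.1 p.2)).flatten

/-- The normal-form braid of a subset `S ⊆ {1, …, n-2}`. -/
def normalBraid (n : ℕ) (S : Finset ℕ) : BraidGroup n := wordProd n (normalWord n S)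

open scoped List

/- ### Auxiliary lemmas -/

lemma chainDesc_eq_reverse (a b : ℕ) (hab : a ≤ b) :
    chainDesc a b = (List.range' (a + 1) (b - a)).reverse := by
  rw [List.reverse_range', chainDesc]
  apply List.map_congr_left
  intro t ht
  rw [List.mem_range] at ht
  omega

/-- A recursive version of the normal word. -/
def NW : ℕ → List ℕ → ℕ → List ℕ
  | a, [], m => chainDesc a m
  | a, b :: s, m => chainDesc a b ++ NW b s m

lemma zipflat_eq_NW : ∀ (s : List ℕ) (a m : ℕ),
    (((a :: (s ++ [m])).zip (s ++ [m])).map (fun p => chainDesc p.1 p.2)).flatten = NW a s m := by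
  intro s
  induction s with
  | nil => intro a m; simp [NW]
  | cons b s ih =>
      intro a m
      simp only [List.cons_append, List.zip_cons_cons, List.map_cons, List.flatten_cons, NW,
        ih b m]

lemma normalWord_eq_NW (n : ℕ) (S : Finset ℕ) :
    normalWord n S = NW 0 (S.sort (· ≤ ·)) (n - 1) := by
  rw [normalWord, ← zipflat_eq_NW]
  rfl

lemma NW_perm : ∀ (s : List ℕ) (a m : ℕ), (a :: (s ++ [m])).Pairwise (· < ·) →
    (NW a s m).Perm (List.range' (a + 1) (m - a)) := by
  intro s
  induction s with
  | nil =>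
      intro a m hp
      have ham : a < m := by
        have := List.rel_of_pairwise_cons hp (by simp : m ∈ [] ++ [m])
        exact this
      rw [NW, chainDesc_eq_reverse a m ham.le]
      exact List.reverse_perm _
  | cons b s ih =>
      intro a m hp
      have hab : a < b := List.rel_of_pairwise_cons hp (by simp)
      have hp' : (b :: (s ++ [m])).Pairwise (· < ·) := hp.of_cons
      have hbm : b < m := List.rel_of_pairwise_cons hp' (by simp)
      rw [NW, chainDesc_eq_reverse a b hab.le]
      refine ((List.reverse_perm _).append (ih b m hp')).trans ?_
      have h1 := List.range'_append_1 (s := a + 1) (m := b - a) (n := m - b)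
      rw [show a + 1 + (b - a) = b + 1 by omega] at h1
      rw [h1, show b - a + (m - b) = m - a by omega]

lemma mem_NW {s : List ℕ} {a m x : ℕ} (hp : (a :: (s ++ [m])).Pairwise (· < ·)) :
    x ∈ NW a s m ↔ a < x ∧ x ≤ m := by
  have ham : a < m := List.rel_of_pairwise_cons hp (by simp)
  rw [(NW_perm s a m hp).mem_iff, List.mem_range'_1]
  omega

lemma NW_sublist_asc : ∀ (s : List ℕ) (a m i : ℕ), (a :: (s ++ [m])).Pairwise (· < ·) →
    i ∈ s → [i, i + 1] <+ NW a s m := by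
  intro s
  induction s with
  | nil => intro a m i _ h; cases h
  | cons b s ih =>
      intro a m i hp hi
      have hab : a < b := List.rel_of_pairwise_cons hp (by simp)
      have hp' : (b :: (s ++ [m])).Pairwise (· < ·) := hp.of_cons
      have hbm : b < m := List.rel_of_pairwise_cons hp' (by simp)
      rw [NW]
      rcases List.mem_cons.mp hi with rfl | hi
      · have h1 : [i] <+ chainDesc a i := by
          rw [List.singleton_sublist, chainDesc_eq_reverse a i hab.le, List.mem_reverse,
            List.mem_range'_1]
          omega
        have h2 : [i + 1] <+ NW i s m := by
          rw [List.singleton_sublist, mem_NW hp']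
          omega
        exact h1.append h2
      · exact (ih b m i hp' hi).trans (List.sublist_append_right _ _)

lemma chainDesc_pair (a b i : ℕ) (hai : a < i) (hib : i + 1 ≤ b) :
    [i + 1, i] <+ chainDesc a b := by
  rw [chainDesc_eq_reverse a b (by omega)]
  have key : [i, i + 1] <+ List.range' (a + 1) (b - a) := by
    have h1 := List.range'_append_1 (s := a + 1) (m := i - 1 - a) (n := b - i + 1)
    rw [show a + 1 + (i - 1 - a) = i by omega,
      show i - 1 - a + (b - i + 1) = b - a by omega] at h1
    have h2 : List.range' i 2 <+ List.range' i (b - i + 1) :=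
      List.range'_sublist_right.mpr (by omega)
    have h3 : [i, i + 1] <+ List.range' i (b - i + 1) := by
      simpa [List.range'] using h2
    exact h3.trans (h1 ▸ List.sublist_append_right _ _)
  simpa using key.reverse

lemma NW_sublist_desc : ∀ (s : List ℕ) (a m i : ℕ), (a :: (s ++ [m])).Pairwise (· < ·) →
    i ∉ s → a < i → i + 1 ≤ m → [i + 1, i] <+ NW a s m := by
  intro s
  induction s with
  | nil => intro a m i _ _ hai him; exact chainDesc_pair a m i hai him
  | cons b s ih =>
      intro a m i hp hi hai him
      have hab : a < b := List.rel_of_pairwise_cons hp (by simp)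
      have hp' : (b :: (s ++ [m])).Pairwise (· < ·) := hp.of_cons
      have hib : i ≠ b := fun h => hi (by simp [h])
      rw [NW]
      rcases lt_or_gt_of_ne hib with h | h
      · exact (chainDesc_pair a b i hai (by omega)).trans (List.sublist_append_left _ _)
      · exact (ih b m i hp' (fun h' => hi (by simp [h'])) h him).trans
          (List.sublist_append_right _ _)

/- ### Group-theoretic lemmas -/

@[simp] lemma wordProd_nil (n : ℕ) : wordProd n [] = 1 := rfl

@[simp] lemma wordProd_cons (n x : ℕ) (l : List ℕ) :
    wordProd n (x :: l) = braidGen n x * wordProd n l := by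
  simp [wordProd]

lemma braidGen_comm_of_le (n a b : ℕ) (h : a + 2 ≤ b) :
    Commute (braidGen n a) (braidGen n b) := by
  unfold braidGen
  split_ifs with h1 h2 h2
  · set i : Fin (n - 1) := ⟨a - 1, by omega⟩ with hi
    set j : Fin (n - 1) := ⟨b - 1, by omega⟩ with hj
    have hr : (FreeGroup.of i * FreeGroup.of j * (FreeGroup.of i)⁻¹ * (FreeGroup.of j)⁻¹)
        ∈ braidRels (n - 1) := by
      left
      exact ⟨i, j, by simp [hi, hj]; omega, rfl⟩
    have h1' : PresentedGroup.mk (braidRels (n - 1))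
        (FreeGroup.of i * FreeGroup.of j * (FreeGroup.of i)⁻¹ * (FreeGroup.of j)⁻¹) = 1 := by
      apply (QuotientGroup.eq_one_iff _).mpr
      exact Subgroup.subset_normalClosure hr
    simp only [map_mul, map_inv] at h1'
    rw [mul_inv_eq_one, mul_inv_eq_iff_eq_mul] at h1'
    exact h1'
  · exact Commute.one_right _
  · exact Commute.one_left _
  · exact Commute.one_left _

lemma braidGen_comm (n a b : ℕ) (h : a + 2 ≤ b ∨ b + 2 ≤ a) :
    Commute (braidGen n a) (braidGen n b) := by
  rcases h with h | h
  · exact braidGen_comm_of_le n a b h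
  · exact (braidGen_comm_of_le n b a h).symm

lemma wordProd_middle (n a : ℕ) : ∀ (xs ys : List ℕ),
    (∀ b ∈ xs, Commute (braidGen n a) (braidGen n b)) →
    wordProd n (xs ++ a :: ys) = braidGen n a * wordProd n (xs ++ ys) := by
  intro xs
  induction xs with
  | nil => intro ys _; simp
  | cons c t ih =>
      intro ys h
      have hc := h c (by simp)
      simp only [List.cons_append, wordProd_cons]
      rw [ih ys (fun b hb => h b (by simp [hb])), ← mul_assoc, ← mul_assoc, hc.eq]

lemma pair_sublist_cons {x y a : ℕ} {t : List ℕ} (h : [x, y] <+ a :: t) (hx : x ≠ a) :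
    [x, y] <+ t := by
  cases h with
  | cons _ h => exact h
  | cons_cons _ h => exact absurd rfl hx

lemma sublist_pair_antisymm : ∀ (l : List ℕ) (x y : ℕ), l.Nodup →
    [x, y] <+ l → [y, x] <+ l → x = y := by
  intro l
  induction l with
  | nil => intro x y _ h; cases h
  | cons c t ih =>
      intro x y hnd h1 h2
      have hct : c ∉ t := (List.nodup_cons.mp hnd).1
      cases h1 with
      | cons _ h1' =>
          cases h2 with
          | cons _ h2' => exact ih x y hnd.of_cons h1' h2'
          | cons_cons _ h2' => exact absurd (h1'.subset (by simp)) hct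
      | cons_cons _ h1' =>
          cases h2 with
          | cons _ h2' => exact absurd (h2'.subset (by simp)) hct
          | cons_cons _ h2' => rfl

/-- The key sorting lemma: two words (with no repeated letters) that agree on the relative
order of every pair of adjacent-indexed letters give the same braid. -/
lemma wordProd_eq_of_adjacent_order (n : ℕ) : ∀ (l' l : List ℕ), l.Perm l' → l'.Nodup →
    (∀ i j : ℕ, (i + 1 = j ∨ j + 1 = i) → [i, j] <+ l → [i, j] <+ l') →
    wordProd n l = wordProd n l' := by
  intro l'
  induction l' with
  | nil => intro l hp _ _; rw [List.Perm.eq_nil hp]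
  | cons a t' ih =>
      intro l hp hnd hcond
      have hat' : a ∉ t' := (List.nodup_cons.mp hnd).1
      have hmem : a ∈ l := hp.mem_iff.mpr (by simp)
      obtain ⟨xs, ys, rfl⟩ := List.append_of_mem hmem
      have hndl : (xs ++ a :: ys).Nodup := hp.nodup_iff.mpr hnd
      have haxy : a ∉ xs ++ ys := (List.nodup_cons.mp (List.nodup_middle.mp hndl)).1
      have hcomm : ∀ b ∈ xs, Commute (braidGen n a) (braidGen n b) := by
        intro b hb
        have hba : b ≠ a := fun h => haxy (by simp [← h, hb])
        by_cases hadj : b + 1 = a ∨ a + 1 = b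
        · exfalso
          have hsub : [b, a] <+ xs ++ a :: ys :=
            (List.singleton_sublist.mpr hb).append
              (List.singleton_sublist.mpr (List.mem_cons_self (a := a) (l := ys)))
          have ht := hcond b a hadj hsub
          exact hat' ((pair_sublist_cons ht hba).subset (by simp))
        · exact braidGen_comm n a b (by omega)
      rw [wordProd_middle n a xs ys hcomm]
      have hperm' : (xs ++ ys).Perm t' := (List.perm_middle.symm.trans hp).cons_inv
      have hcond' : ∀ i j : ℕ, (i + 1 = j ∨ j + 1 = i) → [i, j] <+ xs ++ ys →
          [i, j] <+ t' := by
        intro i j hadj hs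
        have hia : i ≠ a := by
          intro h
          exact haxy (h ▸ hs.subset (by simp))
        exact pair_sublist_cons (hcond i j hadj
          (hs.trans ((List.sublist_cons_self a ys).append_left xs))) hia
      rw [ih (xs ++ ys) hperm' hnd.of_cons hcond', wordProd_cons]

/-- For `n ≥ 2` and any permutation `(i_1, …, i_{n-1})` of `(1, …, n-1)`,
there is a subset `S ⊆ {1, …, n-2}` such that `σ_{i_1} σ_{i_2} ⋯ σ_{i_{n-1}}` equals the
normal-form braid of `S` in `B_n`. -/
theorem permutation_word_eq_normal_form (n : ℕ) (hn : 2 ≤ n) (l : List ℕ)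
    (hperm : l.Perm ((List.range (n - 1)).map (· + 1))) :
    ∃ S : Finset ℕ, S ⊆ Finset.Icc 1 (n - 2) ∧ wordProd n l = normalBraid n S := by
  classical
  set R : List ℕ := (List.range (n - 1)).map (· + 1) with hR
  have hReq : R = List.range' 1 (n - 1) := by
    rw [hR, List.range'_eq_map_range]
    apply List.map_congr_left
    intro x _
    omega
  have hRnd : R.Nodup := by
    rw [hReq]; exact List.nodup_range' (s := 1) (n := n - 1)
  have hlnd : l.Nodup := hperm.nodup_iff.mpr hRnd
  have hbound : ∀ x ∈ l, 1 ≤ x ∧ x ≤ n - 1 := by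
    intro x hx
    have : x ∈ R := hperm.subset hx
    rw [hReq, List.mem_range'_1] at this
    omega
  set S : Finset ℕ := (Finset.Icc 1 (n - 2)).filter (fun i => [i, i + 1] <+ l) with hS
  refine ⟨S, Finset.filter_subset _ _, ?_⟩
  set s : List ℕ := S.sort (· ≤ ·) with hs
  have hmemS : ∀ x, x ∈ s ↔ 1 ≤ x ∧ x ≤ n - 2 ∧ [x, x + 1] <+ l := by
    intro x
    rw [hs, Finset.mem_sort, hS, Finset.mem_filter, Finset.mem_Icc]
    tauto
  have hpw : (0 :: (s ++ [n - 1])).Pairwise (· < ·) := by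
    rw [List.pairwise_cons]
    constructor
    · intro y hy
      rcases List.mem_append.mp hy with hy | hy
      · have := (hmemS y).mp hy; omega
      · simp at hy; omega
    · rw [List.pairwise_append]
      refine ⟨(Finset.sortedLT_sort S).pairwise, by simp, ?_⟩
      intro x hx y hy
      have hx' := (hmemS x).mp hx
      simp at hy
      omega
  have hNWperm : (NW 0 s (n - 1)).Perm (List.range' 1 (n - 1)) := by
    have := NW_perm s 0 (n - 1) hpw
    simpa using this
  have hlNW : l.Perm (NW 0 s (n - 1)) := by
    refine hperm.trans ?_
    rw [hReq]
    exact hNWperm.symm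
  have hNWnd : (NW 0 s (n - 1)).Nodup := hNWperm.nodup_iff.mpr (List.nodup_range' (s := 1) (n := n - 1))
  have hcond : ∀ i j : ℕ, (i + 1 = j ∨ j + 1 = i) → [i, j] <+ l → [i, j] <+ NW 0 s (n - 1) := by
    intro i j hadj hsub
    have hi := hbound i (hsub.subset (by simp))
    have hj := hbound j (hsub.subset (by simp))
    rcases hadj with rfl | rfl
    · -- ascending pair [i, i+1]
      have : i ∈ s := (hmemS i).mpr ⟨hi.1, by omega, hsub⟩
      exact NW_sublist_asc s 0 (n - 1) i hpw this
    · -- descending pair [j+1, j]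
      have hnot : j ∉ s := by
        intro hmem
        have h1 := ((hmemS j).mp hmem).2.2
        have := sublist_pair_antisymm l j (j + 1) hlnd h1 hsub
        omega
      exact NW_sublist_desc s 0 (n - 1) j hpw hnot (by omega) (by omega)
  have := wordProd_eq_of_adjacent_order n (NW 0 s (n - 1)) l hlNW hNWnd hcond
  rw [this, normalBraid, normalWord_eq_NW, ← hs]
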